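/- With the notation of Theorem 1 and its corollary, the false-alarm rate satisfies P_f ≤ (M-K_a) Σ_{i=0}^{t} C(L,i)(1-μ_{K_a})^i μ_{K_a}^{L-i} + p', where p' = 1 - Π_{i=0}^{K_a-1}(1 - i/M) is the probability that the K_a i.i.d. uniform messages are not all distinct, assuming μ_r ≤ μ_{K_a} for all r ≤ K_a. -/

import Mathlib

open Finset

/-- Whether symbol `e` is among the transmitted symbols in slot `i`. -/
def transmitted {M L Q Ka : ℕ} (C : Fin M → Fin L → Fin Q) (W : Fin Ka → Fin M)
    (i : Fin L) (e : Fin Q) : Bool :=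
  decide (∃ u, C (W u) i = e)

/-- Whether symbol `e` appears in the received list of slot `i`. -/
def inList {M L Q Ka : ℕ} (C : Fin M → Fin L → Fin Q) (W : Fin Ka → Fin M)
    (n : Fin L → Fin Q → Bool × Bool) (i : Fin L) (e : Fin Q) : Bool :=
  (transmitted C W i e && !(n i e).1) || (!transmitted C W i e && (n i e).2)

/-- Number of slots in which the codeword of message `mm` misses the received list. -/
def missCount {M L Q Ka : ℕ} (C : Fin M → Fin L → Fin Q) (W : Fin Ka → Fin M)
    (n : Fin L → Fin Q → Bool × Bool) (mm : Fin M) : ℕ :=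
  (Finset.univ.filter (fun i : Fin L => inList C W n i (C mm i) = false)).card

/-- Probability weight of a noise realization. -/
def noiseWeight {L Q : ℕ} (pm pf : ℝ) (n : Fin L → Fin Q → Bool × Bool) : ℝ :=
  ∏ i : Fin L, ∏ e : Fin Q,
    ((if (n i e).1 then pm else 1 - pm) * (if (n i e).2 then pf else 1 - pf))

/-- `μ_r`: probability that a fixed symbol of a fresh random codeword appears in the
output list when `r` distinct codewords were transmitted. -/
noncomputable def muR (Q : ℕ) (pm pf : ℝ) (r : ℕ) : ℝ :=
  (1 - (((Q : ℝ) - 1) / (Q : ℝ)) ^ r) * (1 - pm) + (((Q : ℝ) - 1) / (Q : ℝ)) ^ r * pf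


/-- per-symbol noise weight -/
def pw (pm pf : ℝ) (x : Bool × Bool) : ℝ :=
  (if x.1 then pm else 1 - pm) * (if x.2 then pf else 1 - pf)

lemma sum_fun_prod {ι α : Type*} [Fintype ι] [DecidableEq ι] [Fintype α] (f : ι → α → ℝ) :
    ∑ g : ι → α, ∏ i, f i (g i) = ∏ i, ∑ y, f i y :=
  (Fintype.prod_sum f).symm

lemma pw_total (pm pf : ℝ) : ∑ x : Bool × Bool, pw pm pf x = 1 := by
  simp [pw, Fintype.sum_prod_type, Fintype.sum_bool]; ring

/-- marginal of one coordinate -/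
lemma slot_marg {Q : ℕ} (pm pf : ℝ) (e : Fin Q) (f : Bool × Bool → ℝ) :
    ∑ ν : Fin Q → Bool × Bool, (∏ e', pw pm pf (ν e')) * f (ν e)
      = ∑ x : Bool × Bool, pw pm pf x * f x := by
  have h1 : ∀ ν : Fin Q → Bool × Bool, (∏ e', pw pm pf (ν e')) * f (ν e)
      = ∏ e', (pw pm pf (ν e') * if e' = e then f (ν e') else 1) := by
    intro ν
    rw [Finset.prod_mul_distrib, Finset.prod_ite_eq' Finset.univ e (fun e' => f (ν e'))]
    simp
  simp only [h1]
  rw [sum_fun_prod (fun e' x => pw pm pf x * if e' = e then f x else 1)]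
  rw [Finset.prod_eq_single e]
  · simp
  · intro b _ hb
    simp [hb, ← Finset.sum_mul, pw_total]
  · simp

lemma mu_mem (Q : ℕ) (hQ : 0 < Q) {pm pf : ℝ} (hpm : pm ∈ Set.Icc (0:ℝ) 1)
    (hpf : pf ∈ Set.Icc (0:ℝ) 1) (r : ℕ) : muR Q pm pf r ∈ Set.Icc (0:ℝ) 1 := by
  obtain ⟨h1, h2⟩ := hpm; obtain ⟨h3, h4⟩ := hpf
  have hQ1 : (1:ℝ) ≤ (Q:ℝ) := by exact_mod_cast hQ
  have hq0 : (0:ℝ) ≤ ((Q:ℝ) - 1) / (Q:ℝ) := div_nonneg (by linarith) (by linarith)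
  have hq1 : ((Q:ℝ) - 1) / (Q:ℝ) ≤ 1 := by
    rw [div_le_one (by linarith)]; linarith
  have h5 : (0:ℝ) ≤ (((Q:ℝ) - 1) / (Q:ℝ)) ^ r := by positivity
  have h6 : (((Q:ℝ) - 1) / (Q:ℝ)) ^ r ≤ 1 := pow_le_one₀ hq0 hq1
  constructor
  · unfold muR; nlinarith
  · unfold muR; nlinarith

/-- number of collision-free alternatives -/
lemma count_avoid {M Ka : ℕ} (W : Fin Ka → Fin M) (hW : Function.Injective W) :
    (Finset.univ.filter (fun mm : Fin M => ∀ u, W u ≠ mm)).card = M - Ka := by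
  have : (Finset.univ.filter (fun mm : Fin M => ∀ u, W u ≠ mm))
      = (Finset.univ.image W)ᶜ := by
    ext mm; simp [eq_comm]
  rw [this, Finset.card_compl, Finset.card_image_of_injective _ hW]
  simp

lemma card_inj_fun (M Ka : ℕ) :
    (Finset.univ.filter (fun W : Fin Ka → Fin M => Function.Injective W)).card
      = M.descFactorial Ka := by
  classical
  rw [← Fintype.card_subtype]
  rw [Fintype.card_congr (Equiv.subtypeInjectiveEquivEmbedding (Fin Ka) (Fin M))]
  rw [Fintype.card_embedding_eq]
  simp

lemma sum_ind_ne {Q : ℕ} (e : Fin Q) :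
    ∑ x : Fin Q, (if x = e then (0:ℝ) else 1) = (Q:ℝ) - 1 := by
  have : ∀ x : Fin Q, (if x = e then (0:ℝ) else 1) = 1 - (if x = e then 1 else 0) := by
    intro x; by_cases h : x = e <;> simp [h]
  simp only [this, Finset.sum_sub_distrib, Finset.sum_const, Finset.card_univ,
    Fintype.card_fin, Finset.sum_ite_eq' Finset.univ e (fun _ => (1:ℝ))]
  simp

lemma count_no_hit {M Q Ka : ℕ} (W : Fin Ka → Fin M) (hW : Function.Injective W)
    (mm : Fin M) (hmm : ∀ u, W u ≠ mm) :
    ∑ c : Fin M → Fin Q, (if ∀ u, c (W u) ≠ c mm then (1:ℝ) else 0)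
      = (Q:ℝ) * ((Q:ℝ) - 1) ^ Ka * (Q:ℝ) ^ (M - 1 - Ka) := by
  classical
  set A : Finset (Fin M) := Finset.univ.image W with hA
  have hmmA : mm ∉ A := by simp [hA]; intro u h; exact hmm u h
  have hAcard : A.card = Ka := by
    rw [hA, Finset.card_image_of_injective _ hW]; simp
  have hAsub : A ⊆ Finset.univ.erase mm := by
    intro m hm; rw [Finset.mem_erase]; exact ⟨fun h => hmmA (h ▸ hm), Finset.mem_univ m⟩
  set gfun : Fin Q → Fin M → Fin Q → ℝ := fun e m x =>
    if m = mm then (if x = e then 1 else 0) else if m ∈ A then (if x = e then 0 else 1) else 1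
    with hgfun
  have hpoint : ∀ c : Fin M → Fin Q,
      (if ∀ u, c (W u) ≠ c mm then (1:ℝ) else 0) = ∑ e, ∏ m, gfun e m (c m) := by
    intro c
    have hprod : ∀ e, (∏ m, gfun e m (c m))
        = (if c mm = e then (1:ℝ) else 0) * (if ∀ u, c (W u) ≠ e then 1 else 0) := by
      intro e
      rw [← Finset.mul_prod_erase Finset.univ _ (Finset.mem_univ mm)]
      have h1 : gfun e mm (c mm) = (if c mm = e then (1:ℝ) else 0) := by simp [hgfun]
      have h2 : ∀ m ∈ Finset.univ.erase mm, gfun e m (c m)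
          = (if m ∈ A then (if c m = e then (0:ℝ) else 1) else 1) := by
        intro m hm; simp [hgfun, (Finset.mem_erase.1 hm).1]
      rw [h1, Finset.prod_congr rfl h2, Finset.prod_ite_mem,
        Finset.inter_eq_right.2 hAsub]
      congr 1
      by_cases h : ∀ u, c (W u) ≠ e
      · rw [if_pos h, Finset.prod_eq_one]
        intro m hm
        rw [hA, Finset.mem_image] at hm
        obtain ⟨u, _, rfl⟩ := hm
        simp [h u]
      · rw [if_neg h]
        push_neg at h
        obtain ⟨u, hu⟩ := h
        refine Finset.prod_eq_zero (i := W u) ?_ (by simp [hu])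
        rw [hA, Finset.mem_image]; exact ⟨u, Finset.mem_univ u, rfl⟩
    simp only [hprod, ite_mul, one_mul, zero_mul]
    rw [Finset.sum_ite_eq Finset.univ (c mm) (fun e => if ∀ u, c (W u) ≠ e then (1:ℝ) else 0)]
    simp
  simp only [hpoint]
  rw [Finset.sum_comm]
  have hinner : ∀ e : Fin Q, ∑ c : Fin M → Fin Q, ∏ m, gfun e m (c m)
      = ((Q:ℝ) - 1) ^ Ka * (Q:ℝ) ^ (M - 1 - Ka) := by
    intro e
    rw [sum_fun_prod (fun m x => gfun e m x)]
    have hx : ∀ m : Fin M, (∑ x : Fin Q, gfun e m x)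
        = if m = mm then 1 else if m ∈ A then (Q:ℝ) - 1 else Q := by
      intro m
      by_cases h1 : m = mm
      · simp [hgfun, h1, Finset.sum_ite_eq' Finset.univ e (fun _ => (1:ℝ))]
      · by_cases h2 : m ∈ A
        · simp only [hgfun, h1, if_false, h2, if_true]
          exact sum_ind_ne e
        · simp [hgfun, h1, h2]
    rw [Finset.prod_congr rfl (fun m _ => hx m),
      ← Finset.mul_prod_erase Finset.univ _ (Finset.mem_univ mm)]
    rw [if_pos rfl, one_mul]
    have h2 : ∀ m ∈ Finset.univ.erase mm,
        (if m = mm then (1:ℝ) else if m ∈ A then (Q:ℝ) - 1 else Q)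
        = if m ∈ A then (Q:ℝ) - 1 else Q := by
      intro m hm; simp [(Finset.mem_erase.1 hm).1]
    rw [Finset.prod_congr rfl h2, Finset.prod_ite, Finset.prod_const, Finset.prod_const]
    have hc1 : ((Finset.univ.erase mm).filter (· ∈ A)).card = Ka := by
      rw [Finset.filter_mem_eq_inter, Finset.inter_eq_right.2 hAsub, hAcard]
    have hc2 : ((Finset.univ.erase mm).filter (fun m => ¬ m ∈ A)).card = M - 1 - Ka := by
      rw [Finset.filter_not, Finset.card_sdiff_of_subset (Finset.filter_subset _ _)]
      rw [Finset.filter_mem_eq_inter, Finset.inter_eq_right.2 hAsub, hAcard]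
      congr 1
      rw [Finset.card_erase_of_mem (Finset.mem_univ mm)]
      simp
    rw [hc1, hc2]
  simp only [hinner, Finset.sum_const, Finset.card_univ, Fintype.card_fin, nsmul_eq_mul]
  ring

def hitB {M Q Ka : ℕ} (W : Fin Ka → Fin M) (mm : Fin M)
    (x : (Fin M → Fin Q) × (Fin Q → Bool × Bool)) : Bool :=
  (decide (∃ u, x.1 (W u) = x.1 mm) && !(x.2 (x.1 mm)).1) ||
    (!decide (∃ u, x.1 (W u) = x.1 mm) && (x.2 (x.1 mm)).2)

lemma hit_prob {M Q Ka : ℕ} (hQ : 0 < Q) (pm pf : ℝ) (W : Fin Ka → Fin M)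
    (hW : Function.Injective W) (mm : Fin M) (hmm : ∀ u, W u ≠ mm) (hKaM : Ka < M) :
    ∑ c : Fin M → Fin Q, ∑ ν : Fin Q → Bool × Bool,
      ((1 / (Q:ℝ) ^ M) * ∏ e, pw pm pf (ν e)) *
        (if hitB W mm (c, ν) = true then (1:ℝ) else 0)
      = muR Q pm pf Ka := by
  classical
  have hQ0 : (Q:ℝ) ≠ 0 := by positivity
  have hstep : ∀ c : Fin M → Fin Q,
      (∑ ν : Fin Q → Bool × Bool,
        ((1 / (Q:ℝ) ^ M) * ∏ e, pw pm pf (ν e)) *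
          (if hitB W mm (c, ν) = true then (1:ℝ) else 0))
      = (1 / (Q:ℝ) ^ M) * (if ∃ u, c (W u) = c mm then 1 - pm else pf) := by
    intro c
    by_cases h : ∃ u, c (W u) = c mm
    · have hb : decide (∃ u, c (W u) = c mm) = true := decide_eq_true h
      have h2 : ∀ ν : Fin Q → Bool × Bool,
          ((1 / (Q:ℝ) ^ M) * ∏ e, pw pm pf (ν e)) *
            (if hitB W mm (c, ν) = true then (1:ℝ) else 0)
          = (1 / (Q:ℝ) ^ M) * ((∏ e, pw pm pf (ν e)) *
              (if (ν (c mm)).1 = false then (1:ℝ) else 0)) := by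
        intro ν
        have : hitB W mm (c, ν) = !(ν (c mm)).1 := by simp [hitB, hb]
        rw [this]
        rcases (ν (c mm)).1 <;> simp
      simp only [h2]
      rw [← Finset.mul_sum,
        slot_marg pm pf (c mm) (fun x => if x.1 = false then (1:ℝ) else 0), if_pos h]
      congr 1
      simp [pw, Fintype.sum_prod_type, Fintype.sum_bool]
      ring
    · have hb : decide (∃ u, c (W u) = c mm) = false := decide_eq_false h
      have h2 : ∀ ν : Fin Q → Bool × Bool,
          ((1 / (Q:ℝ) ^ M) * ∏ e, pw pm pf (ν e)) *
            (if hitB W mm (c, ν) = true then (1:ℝ) else 0)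
          = (1 / (Q:ℝ) ^ M) * ((∏ e, pw pm pf (ν e)) *
              (if (ν (c mm)).2 = true then (1:ℝ) else 0)) := by
        intro ν
        have : hitB W mm (c, ν) = (ν (c mm)).2 := by simp [hitB, hb]
        rw [this]
        rcases (ν (c mm)).2 <;> simp
      simp only [h2]
      rw [← Finset.mul_sum,
        slot_marg pm pf (c mm) (fun x => if x.2 = true then (1:ℝ) else 0), if_neg h]
      congr 1
      simp [pw, Fintype.sum_prod_type, Fintype.sum_bool]
      ring
  simp only [hstep]
  have hsplit : ∀ c : Fin M → Fin Q,
      (if ∃ u, c (W u) = c mm then 1 - pm else pf)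
      = (1 - pm) + (pf - (1 - pm)) * (if ∀ u, c (W u) ≠ c mm then (1:ℝ) else 0) := by
    intro c
    by_cases h : ∃ u, c (W u) = c mm
    · have h' : ¬ ∀ u, c (W u) ≠ c mm := by push_neg; exact h
      simp [h, h']
    · have h' : ∀ u, c (W u) ≠ c mm := by push_neg at h; exact h
      simp [h, h']
  simp only [hsplit, mul_add, Finset.sum_add_distrib, ← Finset.mul_sum]
  rw [count_no_hit W hW mm hmm]
  rw [Finset.sum_const, Finset.card_univ]
  have hcard : (Fintype.card (Fin M → Fin Q) : ℝ) = (Q:ℝ) ^ M := by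
    simp [Fintype.card_fun]
  have hQM : ((Q:ℝ)) ^ M = (Q:ℝ) * (Q:ℝ) ^ Ka * (Q:ℝ) ^ (M - 1 - Ka) := by
    rw [← pow_succ', ← pow_add]
    congr 1
    omega
  have hQk : ((Q:ℝ)) ^ Ka ≠ 0 := by positivity
  have hQm1 : ((Q:ℝ)) ^ (M - 1 - Ka) ≠ 0 := by positivity
  rw [nsmul_eq_mul, hcard]
  unfold muR
  rw [div_pow]
  rw [hQM]
  field_simp
  ring

noncomputable def wxd (Q M : ℕ) (pm pf : ℝ) (x : (Fin M → Fin Q) × (Fin Q → Bool × Bool)) : ℝ :=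
  (1 / (Q:ℝ) ^ M) * ∏ e, pw pm pf (x.2 e)

lemma wx_total {M Q : ℕ} (hQ : 0 < Q) (pm pf : ℝ) :
    ∑ x : (Fin M → Fin Q) × (Fin Q → Bool × Bool), wxd Q M pm pf x = 1 := by
  rw [Fintype.sum_prod_type]
  have h1 : ∑ ν : Fin Q → Bool × Bool, ∏ e, pw pm pf (ν e) = 1 := by
    rw [sum_fun_prod (fun _ x => pw pm pf x)]
    simp [pw_total]
  have h2 : ∀ c : Fin M → Fin Q, ∑ ν : Fin Q → Bool × Bool, wxd Q M pm pf (c, ν)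
      = 1 / (Q:ℝ) ^ M := by
    intro c
    unfold wxd
    rw [← Finset.mul_sum, h1, mul_one]
  simp only [h2, Finset.sum_const, Finset.card_univ, nsmul_eq_mul]
  have : (Fintype.card (Fin M → Fin Q) : ℝ) = (Q:ℝ) ^ M := by simp [Fintype.card_fun]
  rw [this]
  field_simp

lemma hit_sum {M Q Ka : ℕ} (hQ : 0 < Q) (pm pf : ℝ) (W : Fin Ka → Fin M)
    (hW : Function.Injective W) (mm : Fin M) (hmm : ∀ u, W u ≠ mm) (hKaM : Ka < M) :
    ∑ x : (Fin M → Fin Q) × (Fin Q → Bool × Bool),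
      (if hitB W mm x = true then wxd Q M pm pf x else 0) = muR Q pm pf Ka := by
  have := hit_prob hQ pm pf W hW mm hmm hKaM
  rw [← this, Fintype.sum_prod_type]
  congr 1; funext c; congr 1; funext ν
  unfold wxd
  by_cases h : hitB W mm (c, ν) = true <;> simp [h]

lemma miss_sum {M Q Ka : ℕ} (hQ : 0 < Q) (pm pf : ℝ) (W : Fin Ka → Fin M)
    (hW : Function.Injective W) (mm : Fin M) (hmm : ∀ u, W u ≠ mm) (hKaM : Ka < M) :
    ∑ x : (Fin M → Fin Q) × (Fin Q → Bool × Bool),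
      (if hitB W mm x = false then wxd Q M pm pf x else 0) = 1 - muR Q pm pf Ka := by
  have key : ∀ x : (Fin M → Fin Q) × (Fin Q → Bool × Bool),
      (if hitB W mm x = false then wxd Q M pm pf x else 0)
      = wxd Q M pm pf x - (if hitB W mm x = true then wxd Q M pm pf x else 0) := by
    intro x
    rcases h : hitB W mm x <;> simp [h]
  simp only [key, Finset.sum_sub_distrib]
  rw [wx_total hQ pm pf, hit_sum hQ pm pf W hW mm hmm hKaM]


def EE (M L Q : ℕ) : (Fin L → (Fin M → Fin Q) × (Fin Q → Bool × Bool)) ≃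
    ((Fin M → Fin L → Fin Q) × (Fin L → Fin Q → Bool × Bool)) where
  toFun g := (fun m i => (g i).1 m, fun i => (g i).2)
  invFun p := fun i => (fun m => p.1 m i, p.2 i)
  left_inv g := rfl
  right_inv p := rfl

lemma T_eq {M L Q Ka t : ℕ} (hQ : 0 < Q) (ht : t ≤ L) (pm pf : ℝ)
    (W : Fin Ka → Fin M) (hW : Function.Injective W)
    (mm : Fin M) (hmm : ∀ u, W u ≠ mm) (hKaM : Ka < M) :
    ∑ C : Fin M → Fin L → Fin Q, ∑ n : Fin L → Fin Q → Bool × Bool,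
      ((1 / (Q:ℝ) ^ (M * L)) * noiseWeight pm pf n) *
        (if missCount C W n mm ≤ t then (1:ℝ) else 0)
    = ∑ i ∈ Finset.range (t+1),
        (L.choose i : ℝ) * (1 - muR Q pm pf Ka) ^ i * (muR Q pm pf Ka) ^ (L - i) := by
  classical
  set μ := muR Q pm pf Ka with hμdef
  have h1 : (∑ C : Fin M → Fin L → Fin Q, ∑ n : Fin L → Fin Q → Bool × Bool,
      ((1 / (Q:ℝ) ^ (M * L)) * noiseWeight pm pf n) *
        (if missCount C W n mm ≤ t then (1:ℝ) else 0))
      = ∑ g : Fin L → (Fin M → Fin Q) × (Fin Q → Bool × Bool),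
          (∏ i, wxd Q M pm pf (g i)) *
            (if (Finset.univ.filter fun i => hitB W mm (g i) = false).card ≤ t
              then (1:ℝ) else 0) := by
    rw [← Fintype.sum_prod_type']
    rw [← Equiv.sum_comp (EE M L Q) (fun p => ((1 / (Q:ℝ) ^ (M * L)) * noiseWeight pm pf p.2)
      * (if missCount p.1 W p.2 mm ≤ t then (1:ℝ) else 0))]
    apply Finset.sum_congr rfl
    intro g _
    have hmiss : missCount ((EE M L Q) g).1 W ((EE M L Q) g).2 mm
        = (Finset.univ.filter fun i => hitB W mm (g i) = false).card := rfl
    have hw : (1 / (Q:ℝ) ^ (M * L)) * noiseWeight pm pf ((EE M L Q) g).2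
        = ∏ i, wxd Q M pm pf (g i) := by
      show (1 / (Q:ℝ) ^ (M * L)) * noiseWeight pm pf (fun i => (g i).2)
        = ∏ i, wxd Q M pm pf (g i)
      unfold noiseWeight wxd pw
      rw [Finset.prod_mul_distrib, Finset.prod_const, Finset.card_univ, Fintype.card_fin]
      congr 1
      rw [div_pow, one_pow, ← pow_mul]
    show ((1 / (Q:ℝ) ^ (M * L)) * noiseWeight pm pf ((EE M L Q) g).2)
      * (if missCount ((EE M L Q) g).1 W ((EE M L Q) g).2 mm ≤ t then (1:ℝ) else 0) = _
    rw [hmiss, hw]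
  rw [h1]
  have h2 : ∀ g : Fin L → (Fin M → Fin Q) × (Fin Q → Bool × Bool),
      (∏ i, wxd Q M pm pf (g i)) *
        (if (Finset.univ.filter fun i => hitB W mm (g i) = false).card ≤ t
          then (1:ℝ) else 0)
      = ∑ S : Finset (Fin L),
          (if (Finset.univ.filter fun i => hitB W mm (g i) = false) = S
            then (∏ i, wxd Q M pm pf (g i)) * (if S.card ≤ t then (1:ℝ) else 0) else 0) := by
    intro g
    rw [Finset.sum_ite_eq Finset.univ (Finset.univ.filter fun i => hitB W mm (g i) = false)
      (fun S => (∏ i, wxd Q M pm pf (g i)) * (if S.card ≤ t then (1:ℝ) else 0))]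
    simp
  simp only [h2]
  rw [Finset.sum_comm]
  have h3 : ∀ S : Finset (Fin L),
      (∑ g : Fin L → (Fin M → Fin Q) × (Fin Q → Bool × Bool),
        if (Finset.univ.filter fun i => hitB W mm (g i) = false) = S
        then (∏ i, wxd Q M pm pf (g i)) * (if S.card ≤ t then (1:ℝ) else 0) else 0)
      = (if S.card ≤ t then (1:ℝ) else 0) * ((1 - μ) ^ S.card * μ ^ (L - S.card)) := by
    intro S
    have hpt : ∀ g : Fin L → (Fin M → Fin Q) × (Fin Q → Bool × Bool),
        (if (Finset.univ.filter fun i => hitB W mm (g i) = false) = S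
          then (∏ i, wxd Q M pm pf (g i)) * (if S.card ≤ t then (1:ℝ) else 0) else 0)
        = (if S.card ≤ t then (1:ℝ) else 0) * ∏ i, (if i ∈ S
            then (if hitB W mm (g i) = false then wxd Q M pm pf (g i) else 0)
            else (if hitB W mm (g i) = true then wxd Q M pm pf (g i) else 0)) := by
      intro g
      by_cases h : (Finset.univ.filter fun i => hitB W mm (g i) = false) = S
      · rw [if_pos h, mul_comm]
        congr 1
        refine (Finset.prod_congr rfl ?_)
        intro i _
        have hi : i ∈ S ↔ hitB W mm (g i) = false := by rw [← h]; simp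
        by_cases h2 : i ∈ S
        · rw [if_pos h2, if_pos (hi.1 h2)]
        · have hb : hitB W mm (g i) = true := by
            by_contra hb
            exact h2 (hi.2 (by simpa using hb))
          rw [if_neg h2, if_pos hb]
      · rw [if_neg h]
        symm
        rw [mul_eq_zero]
        right
        have hex : ∃ i, ¬ (i ∈ S ↔ hitB W mm (g i) = false) := by
          by_contra hc
          push_neg at hc
          exact h (by ext i; simp [(hc i).symm])
        obtain ⟨i, hi⟩ := hex
        apply Finset.prod_eq_zero (Finset.mem_univ i)
        by_cases h2 : i ∈ S
        · have hb : ¬ hitB W mm (g i) = false := fun hf => hi ⟨fun _ => hf, fun _ => h2⟩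
          simp [h2, hb]
        · have hb : hitB W mm (g i) = false := by
            by_contra hb
            exact hi ⟨fun hS => absurd hS h2, fun hf => absurd hf hb⟩
          simp [h2, hb]
    simp only [hpt]
    rw [← Finset.mul_sum]
    congr 1
    rw [sum_fun_prod (fun i x => if i ∈ S
        then (if hitB W mm x = false then wxd Q M pm pf x else 0)
        else (if hitB W mm x = true then wxd Q M pm pf x else 0))]
    have hfac : ∀ i : Fin L, (∑ x : (Fin M → Fin Q) × (Fin Q → Bool × Bool), if i ∈ S
        then (if hitB W mm x = false then wxd Q M pm pf x else 0)
        else (if hitB W mm x = true then wxd Q M pm pf x else 0))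
        = if i ∈ S then 1 - μ else μ := by
      intro i
      by_cases h : i ∈ S
      · simp only [h, if_true]
        exact miss_sum hQ pm pf W hW mm hmm hKaM
      · simp only [h, if_false]
        exact hit_sum hQ pm pf W hW mm hmm hKaM
    rw [Finset.prod_congr rfl (fun i _ => hfac i), Finset.prod_ite, Finset.prod_const,
      Finset.prod_const]
    have hc1 : (Finset.univ.filter (· ∈ S)).card = S.card := by
      rw [Finset.filter_mem_eq_inter, Finset.univ_inter]
    have hc2 : (Finset.univ.filter (fun i => ¬ i ∈ S)).card = L - S.card := by
      rw [Finset.filter_not, Finset.card_sdiff_of_subset (Finset.filter_subset _ _),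
        Finset.filter_mem_eq_inter, Finset.univ_inter, Finset.card_univ, Fintype.card_fin]
    rw [hc1, hc2]
  simp only [h3]
  rw [← Finset.powerset_univ]
  rw [Finset.sum_powerset_apply_card
    (fun k => (if k ≤ t then (1:ℝ) else 0) * ((1 - μ) ^ k * μ ^ (L - k)))]
  simp only [Finset.card_univ, Fintype.card_fin]
  rw [← Finset.sum_subset (Finset.range_subset_range.2 (by omega) :
      Finset.range (t+1) ⊆ Finset.range (L+1))]
  · apply Finset.sum_congr rfl
    intro k hk
    rw [Finset.mem_range, Nat.lt_succ_iff] at hk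
    rw [if_pos hk, one_mul, nsmul_eq_mul, mul_assoc]
  · intro k _ hk
    rw [Finset.mem_range, Nat.lt_succ_iff] at hk
    push_neg at hk
    rw [if_neg (by omega), zero_mul, smul_zero]


lemma noiseWeight_total {L Q : ℕ} (pm pf : ℝ) :
    ∑ n : Fin L → Fin Q → Bool × Bool, noiseWeight pm pf n = 1 := by
  have h : ∀ n : Fin L → Fin Q → Bool × Bool, noiseWeight pm pf n
      = ∏ i, (fun ν : Fin Q → Bool × Bool => ∏ e, pw pm pf (ν e)) (n i) := fun n => rfl
  simp only [h]
  rw [sum_fun_prod (fun (_ : Fin L) (ν : Fin Q → Bool × Bool) => ∏ e, pw pm pf (ν e))]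
  have h2 : ∀ i : Fin L, ∑ ν : Fin Q → Bool × Bool, ∏ e, pw pm pf (ν e) = 1 := by
    intro i
    rw [sum_fun_prod (fun (_ : Fin Q) (x : Bool × Bool) => pw pm pf x)]
    simp [pw_total]
  rw [Finset.prod_congr rfl (fun i _ => h2 i), Finset.prod_const_one]

lemma collision_prob {M Ka : ℕ} (hM : 0 < M) (hKaM : Ka ≤ M) :
    ((M:ℝ) ^ Ka - (M.descFactorial Ka : ℝ)) / (M:ℝ) ^ Ka
      = 1 - ∏ i ∈ Finset.range Ka, (1 - (i:ℝ) / (M:ℝ)) := by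
  have hM0 : (M:ℝ) ≠ 0 := by positivity
  have hprod : ∏ i ∈ Finset.range Ka, (1 - (i:ℝ) / (M:ℝ))
      = (M.descFactorial Ka : ℝ) / (M:ℝ) ^ Ka := by
    have h1 : ∀ i ∈ Finset.range Ka, (1 - (i:ℝ) / (M:ℝ)) = ((M:ℝ) - i) / (M:ℝ) := by
      intro i _; field_simp
    rw [Finset.prod_congr rfl h1, Finset.prod_div_distrib, Finset.prod_const,
      Finset.card_range]
    congr 1
    rw [Nat.descFactorial_eq_prod_range, Nat.cast_prod]
    refine Finset.prod_congr rfl ?_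
    intro i hi
    rw [Nat.cast_sub (le_trans (le_of_lt (Finset.mem_range.1 hi)) hKaM)]
  rw [hprod]
  have hMk : (M:ℝ) ^ Ka ≠ 0 := by positivity
  field_simp

lemma lt_of_inj_avoid {M Ka : ℕ} (W : Fin Ka → Fin M) (hW : Function.Injective W)
    (mm : Fin M) (hmm : ∀ u, W u ≠ mm) : Ka < M := by
  classical
  have h1 : Finset.univ.image W ⊆ Finset.univ.erase mm := by
    intro m hm
    rw [Finset.mem_erase]
    refine ⟨?_, Finset.mem_univ m⟩
    rw [Finset.mem_image] at hm
    obtain ⟨u, _, rfl⟩ := hm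
    exact hmm u
  have h2 := Finset.card_le_card h1
  rw [Finset.card_image_of_injective _ hW, Finset.card_univ, Fintype.card_fin,
    Finset.card_erase_of_mem (Finset.mem_univ mm), Finset.card_univ, Fintype.card_fin] at h2
  have h3 : 0 < M := mm.pos
  omega

/-- Corollary to Theorem 1: assuming `μ_r ≤ μ_{K_a}` for all `r ≤ K_a`, the false-alarm
probability (the probability that some non-transmitted message is accepted) is at most
`(M-K_a) Σ_{i=0}^{t} C(L,i)(1-μ_{K_a})^i μ_{K_a}^{L-i} + p'`, where
`p' = 1 - ∏_{i=0}^{K_a-1}(1 - i/M)` is the collision probability of the messages. -/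
theorem stmt10 (M L Q Ka t : ℕ) (hM : 0 < M) (hL : 0 < L) (hQ : 0 < Q) (hKa : 0 < Ka)
    (hKaM : Ka ≤ M) (ht : t ≤ L) (pm pf : ℝ)
    (hpm : pm ∈ Set.Icc (0 : ℝ) 1) (hpf : pf ∈ Set.Icc (0 : ℝ) 1)
    (hmono : ∀ r, 1 ≤ r → r ≤ Ka → muR Q pm pf r ≤ muR Q pm pf Ka) :
    (∑ C : Fin M → Fin L → Fin Q, ∑ W : Fin Ka → Fin M, ∑ n : Fin L → Fin Q → Bool × Bool,
      ((1 / (Q : ℝ) ^ (M * L)) * (1 / (M : ℝ) ^ Ka) * noiseWeight pm pf n) *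
        (if ∃ mm : Fin M, (∀ u, W u ≠ mm) ∧ missCount C W n mm ≤ t then (1 : ℝ) else 0))
    ≤ ((M : ℝ) - (Ka : ℝ)) *
        (∑ i ∈ Finset.range (t + 1),
          (L.choose i : ℝ) * (1 - muR Q pm pf Ka) ^ i * (muR Q pm pf Ka) ^ (L - i))
      + (1 - ∏ i ∈ Finset.range Ka, (1 - (i : ℝ) / (M : ℝ))) := by
  classical
  obtain ⟨hμ0, hμ1⟩ := mu_mem Q hQ hpm hpf Ka
  set μ := muR Q pm pf Ka with hμdef
  set S := ∑ i ∈ Finset.range (t + 1),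
      (L.choose i : ℝ) * (1 - μ) ^ i * μ ^ (L - i) with hSdef
  have hS0 : 0 ≤ S := by
    apply Finset.sum_nonneg
    intro i _
    have h1 : (0:ℝ) ≤ 1 - μ := by linarith
    positivity
  have hnw0 : ∀ n : Fin L → Fin Q → Bool × Bool, 0 ≤ noiseWeight pm pf n := by
    intro n
    apply Finset.prod_nonneg; intro i _
    apply Finset.prod_nonneg; intro e _
    obtain ⟨h1, h2⟩ := hpm; obtain ⟨h3, h4⟩ := hpf
    apply mul_nonneg <;> split <;> linarith
  have hw0 : ∀ n : Fin L → Fin Q → Bool × Bool,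
      0 ≤ (1 / (Q:ℝ) ^ (M * L)) * (1 / (M:ℝ) ^ Ka) * noiseWeight pm pf n := fun n =>
    mul_nonneg (mul_nonneg (by positivity) (by positivity)) (hnw0 n)
  have hpoint : ∀ (C : Fin M → Fin L → Fin Q) (W : Fin Ka → Fin M)
      (n : Fin L → Fin Q → Bool × Bool),
      (if ∃ mm : Fin M, (∀ u, W u ≠ mm) ∧ missCount C W n mm ≤ t then (1:ℝ) else 0)
      ≤ (if ¬ Function.Injective W then (1:ℝ) else 0)
        + (if Function.Injective W then
            ∑ mm : Fin M, (if (∀ u, W u ≠ mm) ∧ missCount C W n mm ≤ t then (1:ℝ) else 0)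
          else 0) := by
    intro C W n
    by_cases hInj : Function.Injective W
    · simp only [hInj, not_true, if_false, if_true, zero_add]
      by_cases hex : ∃ mm : Fin M, (∀ u, W u ≠ mm) ∧ missCount C W n mm ≤ t
      · rw [if_pos hex]
        obtain ⟨mm, hmm⟩ := hex
        calc (1:ℝ) = (if (∀ u, W u ≠ mm) ∧ missCount C W n mm ≤ t then (1:ℝ) else 0) :=
              (if_pos hmm).symm
          _ ≤ _ := Finset.single_le_sum
              (f := fun mm => (if (∀ u, W u ≠ mm) ∧ missCount C W n mm ≤ t
                then (1:ℝ) else 0))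
              (fun mm _ => by split <;> norm_num) (Finset.mem_univ mm)
      · rw [if_neg hex]
        apply Finset.sum_nonneg; intro mm _; split <;> norm_num
    · simp only [hInj, not_false_iff, if_true, if_false, add_zero]
      split <;> norm_num
  have step1 : (∑ C : Fin M → Fin L → Fin Q, ∑ W : Fin Ka → Fin M,
        ∑ n : Fin L → Fin Q → Bool × Bool,
      ((1 / (Q : ℝ) ^ (M * L)) * (1 / (M : ℝ) ^ Ka) * noiseWeight pm pf n) *
        (if ∃ mm : Fin M, (∀ u, W u ≠ mm) ∧ missCount C W n mm ≤ t then (1 : ℝ) else 0))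
      ≤ (∑ C : Fin M → Fin L → Fin Q, ∑ W : Fin Ka → Fin M,
          ∑ n : Fin L → Fin Q → Bool × Bool,
        ((1 / (Q : ℝ) ^ (M * L)) * (1 / (M : ℝ) ^ Ka) * noiseWeight pm pf n) *
          (if ¬ Function.Injective W then (1:ℝ) else 0))
        + (∑ C : Fin M → Fin L → Fin Q, ∑ W : Fin Ka → Fin M,
            ∑ n : Fin L → Fin Q → Bool × Bool,
          ((1 / (Q : ℝ) ^ (M * L)) * (1 / (M : ℝ) ^ Ka) * noiseWeight pm pf n) *
            (if Function.Injective W then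
              ∑ mm : Fin M, (if (∀ u, W u ≠ mm) ∧ missCount C W n mm ≤ t
                then (1:ℝ) else 0) else 0)) := by
    rw [← Finset.sum_add_distrib]
    apply Finset.sum_le_sum
    intro C _
    rw [← Finset.sum_add_distrib]
    apply Finset.sum_le_sum
    intro W _
    rw [← Finset.sum_add_distrib]
    apply Finset.sum_le_sum
    intro n _
    rw [← mul_add]
    exact mul_le_mul_of_nonneg_left (hpoint C W n) (hw0 n)
  have hPartA : (∑ C : Fin M → Fin L → Fin Q, ∑ W : Fin Ka → Fin M,
        ∑ n : Fin L → Fin Q → Bool × Bool,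
      ((1 / (Q : ℝ) ^ (M * L)) * (1 / (M : ℝ) ^ Ka) * noiseWeight pm pf n) *
        (if ¬ Function.Injective W then (1:ℝ) else 0))
      = 1 - ∏ i ∈ Finset.range Ka, (1 - (i:ℝ) / (M:ℝ)) := by
    have hin : ∀ (W : Fin Ka → Fin M),
        (∑ n : Fin L → Fin Q → Bool × Bool,
          ((1 / (Q : ℝ) ^ (M * L)) * (1 / (M : ℝ) ^ Ka) * noiseWeight pm pf n) *
            (if ¬ Function.Injective W then (1:ℝ) else 0))
        = (1 / (Q : ℝ) ^ (M * L)) * ((1 / (M : ℝ) ^ Ka) *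
            (if ¬ Function.Injective W then (1:ℝ) else 0)) := by
      intro W
      have : ∀ n : Fin L → Fin Q → Bool × Bool,
          ((1 / (Q : ℝ) ^ (M * L)) * (1 / (M : ℝ) ^ Ka) * noiseWeight pm pf n) *
            (if ¬ Function.Injective W then (1:ℝ) else 0)
          = ((1 / (Q : ℝ) ^ (M * L)) * ((1 / (M : ℝ) ^ Ka) *
              (if ¬ Function.Injective W then (1:ℝ) else 0))) * noiseWeight pm pf n := by
        intro n; ring
      simp only [this]
      rw [← Finset.mul_sum, noiseWeight_total, mul_one]
    simp only [hin]
    have hWsum : (∑ W : Fin Ka → Fin M,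
        (1 / (Q : ℝ) ^ (M * L)) * ((1 / (M : ℝ) ^ Ka) *
          (if ¬ Function.Injective W then (1:ℝ) else 0)))
        = (1 / (Q : ℝ) ^ (M * L)) *
            (1 - ∏ i ∈ Finset.range Ka, (1 - (i:ℝ) / (M:ℝ))) := by
      rw [← Finset.mul_sum, ← Finset.mul_sum]
      congr 1
      rw [Finset.sum_boole]
      have hcard : (Finset.univ.filter
            (fun W : Fin Ka → Fin M => ¬ Function.Injective W)).card
          = M ^ Ka - M.descFactorial Ka := by
        rw [Finset.filter_not, Finset.card_sdiff_of_subset (Finset.filter_subset _ _), card_inj_fun]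
        congr 1
        rw [Finset.card_univ, Fintype.card_fun, Fintype.card_fin, Fintype.card_fin]
      rw [hcard, ← collision_prob hM hKaM,
        Nat.cast_sub (Nat.descFactorial_le_pow M Ka)]
      push_cast
      have hMk : ((M:ℝ)) ^ Ka ≠ 0 := by positivity
      field_simp
    simp only [hWsum]
    rw [Finset.sum_const, Finset.card_univ, nsmul_eq_mul]
    have hcardC : (Fintype.card (Fin M → Fin L → Fin Q) : ℝ) = (Q:ℝ) ^ (M * L) := by
      simp only [Fintype.card_fun, Fintype.card_fin]
      push_cast
      ring
    rw [hcardC, ← mul_assoc, mul_one_div, div_self (by positivity : (Q:ℝ) ^ (M*L) ≠ 0),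
      one_mul]
  have hMK0 : (0:ℝ) ≤ (M:ℝ) - (Ka:ℝ) := by
    rw [sub_nonneg]; exact_mod_cast hKaM
  have hPartB : (∑ C : Fin M → Fin L → Fin Q, ∑ W : Fin Ka → Fin M,
        ∑ n : Fin L → Fin Q → Bool × Bool,
      ((1 / (Q : ℝ) ^ (M * L)) * (1 / (M : ℝ) ^ Ka) * noiseWeight pm pf n) *
        (if Function.Injective W then
          ∑ mm : Fin M, (if (∀ u, W u ≠ mm) ∧ missCount C W n mm ≤ t
            then (1:ℝ) else 0) else 0))
      ≤ ((M:ℝ) - (Ka:ℝ)) * S := by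
    rw [Finset.sum_comm]
    have hWterm : ∀ W : Fin Ka → Fin M,
        (∑ C : Fin M → Fin L → Fin Q, ∑ n : Fin L → Fin Q → Bool × Bool,
          ((1 / (Q : ℝ) ^ (M * L)) * (1 / (M : ℝ) ^ Ka) * noiseWeight pm pf n) *
            (if Function.Injective W then
              ∑ mm : Fin M, (if (∀ u, W u ≠ mm) ∧ missCount C W n mm ≤ t
                then (1:ℝ) else 0) else 0))
        ≤ (1 / (M:ℝ) ^ Ka) * (((M:ℝ) - (Ka:ℝ)) * S) := by
      intro W
      by_cases hInj : Function.Injective W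
      · simp only [hInj, if_true]
        have hsw : ∀ (C : Fin M → Fin L → Fin Q) (n : Fin L → Fin Q → Bool × Bool),
            ((1 / (Q : ℝ) ^ (M * L)) * (1 / (M : ℝ) ^ Ka) * noiseWeight pm pf n) *
              (∑ mm : Fin M, (if (∀ u, W u ≠ mm) ∧ missCount C W n mm ≤ t
                then (1:ℝ) else 0))
            = ∑ mm : Fin M, (1 / (M:ℝ) ^ Ka) *
                (((1 / (Q : ℝ) ^ (M * L)) * noiseWeight pm pf n) *
                  (if (∀ u, W u ≠ mm) ∧ missCount C W n mm ≤ t then (1:ℝ) else 0)) := by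
          intro C n
          rw [Finset.mul_sum]
          exact Finset.sum_congr rfl (fun mm _ => by ring)
        simp only [hsw]
        have swap1 : (∑ C : Fin M → Fin L → Fin Q, ∑ n : Fin L → Fin Q → Bool × Bool,
              ∑ mm : Fin M, (1 / (M:ℝ) ^ Ka) *
                (((1 / (Q : ℝ) ^ (M * L)) * noiseWeight pm pf n) *
                  (if (∀ u, W u ≠ mm) ∧ missCount C W n mm ≤ t then (1:ℝ) else 0)))
            = ∑ mm : Fin M, ∑ C : Fin M → Fin L → Fin Q,
                ∑ n : Fin L → Fin Q → Bool × Bool, (1 / (M:ℝ) ^ Ka) *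
                (((1 / (Q : ℝ) ^ (M * L)) * noiseWeight pm pf n) *
                  (if (∀ u, W u ≠ mm) ∧ missCount C W n mm ≤ t then (1:ℝ) else 0)) :=
          (Finset.sum_congr rfl (fun C _ => Finset.sum_comm)).trans Finset.sum_comm
        rw [swap1]
        have hmm_term : ∀ mm : Fin M,
            (∑ C : Fin M → Fin L → Fin Q, ∑ n : Fin L → Fin Q → Bool × Bool,
              (1 / (M:ℝ) ^ Ka) *
                (((1 / (Q : ℝ) ^ (M * L)) * noiseWeight pm pf n) *
                  (if (∀ u, W u ≠ mm) ∧ missCount C W n mm ≤ t then (1:ℝ) else 0)))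
            = (1 / (M:ℝ) ^ Ka) * (if (∀ u, W u ≠ mm) then S else 0) := by
          intro mm
          by_cases hP : ∀ u, W u ≠ mm
          · rw [if_pos hP]
            have hiq : ∀ (C : Fin M → Fin L → Fin Q) (n : Fin L → Fin Q → Bool × Bool),
                (if (∀ u, W u ≠ mm) ∧ missCount C W n mm ≤ t then (1:ℝ) else 0)
                = (if missCount C W n mm ≤ t then (1:ℝ) else 0) := by
              intro C n; by_cases h : missCount C W n mm ≤ t <;> simp [h, hP]
            simp only [hiq, ← Finset.mul_sum]
            congr 1
            have hlt : Ka < M := lt_of_inj_avoid W hInj mm hP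
            rw [hSdef, hμdef]
            have := T_eq hQ ht pm pf W hInj mm hP hlt
            simp only [mul_assoc] at this ⊢
            exact this
          · rw [if_neg hP]
            have hiq : ∀ (C : Fin M → Fin L → Fin Q) (n : Fin L → Fin Q → Bool × Bool),
                (if (∀ u, W u ≠ mm) ∧ missCount C W n mm ≤ t then (1:ℝ) else 0) = 0 := by
              intro C n; simp [hP]
            simp only [hiq, mul_zero, Finset.sum_const, smul_zero, mul_zero]
        simp only [hmm_term]
        rw [← Finset.mul_sum]
        refine mul_le_mul_of_nonneg_left ?_ (by positivity)
        have hix : ∀ mm : Fin M, (if (∀ u, W u ≠ mm) then S else 0)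
            = S * (if (∀ u, W u ≠ mm) then (1:ℝ) else 0) := by
          intro mm; by_cases h : ∀ u, W u ≠ mm <;> simp [h]
        simp only [hix]
        rw [← Finset.mul_sum, Finset.sum_boole, count_avoid W hInj,
          Nat.cast_sub hKaM]
        exact le_of_eq (mul_comm _ _)
      · simp only [hInj, if_false, mul_zero, Finset.sum_const, smul_zero]
        have : (0:ℝ) ≤ (1 / (M:ℝ) ^ Ka) * (((M:ℝ) - (Ka:ℝ)) * S) := by
          apply mul_nonneg (by positivity) (mul_nonneg hMK0 hS0)
        simpa using this
    calc (∑ W : Fin Ka → Fin M, ∑ C : Fin M → Fin L → Fin Q,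
          ∑ n : Fin L → Fin Q → Bool × Bool,
        ((1 / (Q : ℝ) ^ (M * L)) * (1 / (M : ℝ) ^ Ka) * noiseWeight pm pf n) *
          (if Function.Injective W then
            ∑ mm : Fin M, (if (∀ u, W u ≠ mm) ∧ missCount C W n mm ≤ t
              then (1:ℝ) else 0) else 0))
        ≤ ∑ W : Fin Ka → Fin M, (1 / (M:ℝ) ^ Ka) * (((M:ℝ) - (Ka:ℝ)) * S) :=
          Finset.sum_le_sum (fun W _ => hWterm W)
      _ = ((M:ℝ) - (Ka:ℝ)) * S := by
          rw [Finset.sum_const, Finset.card_univ, nsmul_eq_mul, Fintype.card_fun,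
            Fintype.card_fin, Fintype.card_fin]
          push_cast
          have hMk : ((M:ℝ)) ^ Ka ≠ 0 := by positivity
          field_simp
  refine le_trans step1 ?_
  rw [hPartA]
  linarith [hPartB]
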